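/- Let H be a non-trivial projective core with vertex set {z_1,...,z_k}, let F := H^{k(k-1)}, u* := (z_1^{k-1},...,z_k^{k-1}) (each z_i repeated k−1 times), and v* := (z̄_1,...,z̄_k) where z̄_i lists all vertices except z_i. Then: (a) for every pair of distinct vertices x, y of H there is a homomorphism f : F → H with f(u*) = x and f(v*) = y; and (b) every homomorphism f : F → H satisfies f(u*) ≠ f(v*). -/

import Mathlib

/-- The direct power of a graph `H`, indexed by a nonempty type `ι`. -/
def graphPow {α : Type} (ι : Type) (hι : Nonempty ι) (H : SimpleGraph α) :
    SimpleGraph (ι → α) where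
  Adj a b := ∀ i, H.Adj (a i) (b i)
  symm := ⟨fun _ _ h i => (h i).symm⟩
  loopless := ⟨fun a h => H.loopless.irrefl (a hι.some) (h hι.some)⟩

/-- Let `H` be a non-trivial projective core on the `k + 1 ≥ 3`
vertices `Fin (k+1)`, and let `F := H^{(k+1)k}` with coordinates indexed by
`Fin (k+1) × Fin k`. Let `u*` be the tuple whose `(i,j)` coordinate is `i`
(each vertex repeated `k` times) and `v*` the tuple whose `(i,j)` coordinate is
`i.succAbove j` (the `j`-th vertex different from `i`, so `v̄ᵢ` lists all vertices
except `i`). Then (a) for all distinct `x, y` some homomorphism `F → H` sends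
`u* ↦ x` and `v* ↦ y`, and (b) every homomorphism `F → H` sends `u*` and `v*`
to distinct vertices. -/
theorem projective_core_edge_gadget (k : ℕ) (hk : 2 ≤ k)
    (H : SimpleGraph (Fin (k + 1)))
    (hcore : ∀ f : H →g H, Function.Bijective f)
    (hproj : ∀ (m : ℕ) (hm : 2 ≤ m)
      (f : graphPow (Fin m) ⟨⟨0, by omega⟩⟩ H →g H),
      (∀ x, f (fun _ => x) = x) → ∃ i : Fin m, ∀ a, f a = a i) :
    let F := graphPow (Fin (k + 1) × Fin k) ⟨(0, ⟨0, by omega⟩)⟩ H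
    let ustar : Fin (k + 1) × Fin k → Fin (k + 1) := fun p => p.1
    let vstar : Fin (k + 1) × Fin k → Fin (k + 1) := fun p => p.1.succAbove p.2
    (∀ x y : Fin (k + 1), x ≠ y → ∃ f : F →g H, f ustar = x ∧ f vstar = y) ∧
    (∀ f : F →g H, f ustar ≠ f vstar) := by
  intro F ustar vstar
  constructor
  · -- part (a): use a coordinate projection
    intro x y hxy
    obtain ⟨j, hj⟩ := Fin.exists_succAbove_eq hxy.symm
    exact ⟨⟨fun a => a (x, j), fun h => h (x, j)⟩, rfl, hj⟩
  · -- part (b)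
    intro f
    -- the diagonal endomorphism
    let g : H →g H := ⟨fun x => f (fun _ => x), fun h => f.map_rel (fun _ => h)⟩
    have hgb : Function.Bijective g := hcore g
    let e : Equiv.Perm (Fin (k + 1)) := Equiv.ofBijective g hgb
    have he : ∀ x, e x = g x := fun x => rfl
    have hpow : ∀ (n : ℕ) (a b : Fin (k + 1)), H.Adj a b →
        H.Adj ((e ^ n) a) ((e ^ n) b) := by
      intro n
      induction n with
      | zero => intro a b hab; simpa using hab
      | succ n ih =>
        intro a b hab
        have : H.Adj (e a) (e b) := g.map_rel hab
        have := ih _ _ this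
        simpa [pow_succ, Equiv.Perm.mul_apply] using this
    set n := orderOf e with hn'
    have hn : 0 < n := orderOf_pos e
    have hen : e ^ n = 1 := pow_orderOf_eq_one e
    -- idempotent homomorphism h = e^(n-1) ∘ f
    let h : F →g H := ⟨fun a => (e ^ (n - 1)) (f a),
      fun hab => hpow _ _ _ (f.map_rel hab)⟩
    have hid : ∀ x, h (fun _ => x) = x := by
      intro x
      show (e ^ (n - 1)) (g x) = x
      have : (e ^ (n - 1)) (e x) = (e ^ n) x := by
        rw [← Equiv.Perm.mul_apply, ← pow_succ, Nat.sub_add_cancel hn]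
      rw [← he, this, hen]
      rfl
    -- transport along Fin (k+1) × Fin k ≃ Fin ((k+1)*k)
    let ε : Fin (k + 1) × Fin k ≃ Fin ((k + 1) * k) := finProdFinEquiv
    have hm : 2 ≤ (k + 1) * k := by nlinarith
    let h' : graphPow (Fin ((k + 1) * k)) ⟨⟨0, by omega⟩⟩ H →g H :=
      ⟨fun b => h (fun p => b (ε p)), fun hab => h.map_rel (fun p => hab (ε p))⟩
    obtain ⟨i', hi'⟩ := hproj ((k + 1) * k) hm h' (fun x => hid x)
    set i : Fin (k + 1) × Fin k := ε.symm i' with hi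
    have hha : ∀ a : Fin (k + 1) × Fin k → Fin (k + 1), h a = a i := by
      intro a
      have heq : (fun p => a (ε.symm (ε p))) = a := by
        funext p; simp
      calc h a = h' (fun j => a (ε.symm j)) := by
            show h a = h (fun p => a (ε.symm (ε p)))
            rw [heq]
        _ = a i := hi' _
    have hfa : ∀ a : Fin (k + 1) × Fin k → Fin (k + 1), f a = e (a i) := by
      intro a
      have h1 : (e ^ (n - 1)) (f a) = a i := hha a
      have : e ((e ^ (n - 1)) (f a)) = (e ^ n) (f a) := by
        rw [← Equiv.Perm.mul_apply, ← pow_succ', Nat.sub_add_cancel hn]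
      rw [h1] at this
      rw [this, hen]
      rfl
    have hne : ustar i ≠ vstar i := (Fin.succAbove_ne i.1 i.2).symm
    rw [hfa ustar, hfa vstar]
    exact fun hcontra => hne (e.injective hcontra)
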